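/- Let m be a probability measure on [-1,1] and define F₂(m) to be the normalized restriction to the closed unit disk X of the product measure L × m, where L is Lebesgue measure on [-1,1]: F₂(m)(A) = (L × m)(A ∩ X) / (L × m)(X). Then F₂ is continuous from the space of probability measures on [-1,1] with the weak topology to the space of probability measures on X with the weak topology, provided m gives zero mass to the two points {-1, 1} (so that the boundary of X has (L×m)-measure zero and the normalizing constant is positive and varies continuously). -/

import Mathlib

open MeasureTheory Filter
open scoped ENNReal

/-- The closed unit disk in `ℝ × ℝ`. -/
def Disk : Set (ℝ × ℝ) := {p : ℝ × ℝ | p.1 ^ 2 + p.2 ^ 2 ≤ 1}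

/-- `F₂(m)` is the normalized restriction to the unit disk of `Leb|_{[-1,1]} × m`. -/
noncomputable def F2 (m : Measure ℝ) : Measure (ℝ × ℝ) :=
  ((((volume.restrict (Set.Icc (-1 : ℝ) 1)).prod m) Disk)⁻¹ •
    ((volume.restrict (Set.Icc (-1 : ℝ) 1)).prod m).restrict Disk)

/-- half-length of the horizontal slice of the disk at height `y`. -/
noncomputable def sly (y : ℝ) : ℝ := Real.sqrt (1 - y ^ 2)

lemma sly_nonneg (y : ℝ) : 0 ≤ sly y := Real.sqrt_nonneg _

lemma sly_le_one (y : ℝ) : sly y ≤ 1 := Real.sqrt_le_one.2 (by nlinarith [sq_nonneg y])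

lemma continuous_sly : Continuous sly :=
  (continuous_const.sub (continuous_pow 2)).sqrt

lemma measurableSet_Disk : MeasurableSet Disk := by
  have : IsClosed Disk := isClosed_le (by fun_prop) continuous_const
  exact this.measurableSet

/-- slice integral of `g`. -/
noncomputable def Gg (g : BoundedContinuousFunction (ℝ × ℝ) ℝ) (y : ℝ) : ℝ :=
  ∫ x in Set.Icc (-(sly y)) (sly y), g (x, y)

lemma Gg_eq (g : BoundedContinuousFunction (ℝ × ℝ) ℝ) (y : ℝ) :
    Gg g y = sly y * ∫ t in Set.Icc (-1 : ℝ) 1, g (sly y * t, y) := by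
  have h1 : Gg g y = ∫ x in (-(sly y))..(sly y), g (x, y) := by
    rw [Gg, integral_Icc_eq_integral_Ioc,
      intervalIntegral.integral_of_le (by linarith [sly_nonneg y])]
  have h2 : (∫ t in Set.Icc (-1 : ℝ) 1, g (sly y * t, y))
      = ∫ t in (-1 : ℝ)..1, g (sly y * t, y) := by
    rw [integral_Icc_eq_integral_Ioc, intervalIntegral.integral_of_le (by norm_num)]
  rw [h1, h2, ← smul_eq_mul,
    intervalIntegral.smul_integral_comp_mul_left (fun x => g (x, y)) (sly y)]
  norm_num

lemma continuous_Gg (g : BoundedContinuousFunction (ℝ × ℝ) ℝ) : Continuous (Gg g) := by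
  have h1 : Continuous fun y => ∫ t in Set.Icc (-1 : ℝ) 1, g (sly y * t, y) := by
    apply continuous_of_dominated (bound := fun _ => ‖g‖)
    · intro y
      exact (g.continuous.comp
        (((continuous_const.mul continuous_id).prodMk continuous_const))).aestronglyMeasurable
    · intro y
      filter_upwards with t using g.norm_coe_le_norm _
    · exact integrable_const _
    · filter_upwards with t
      exact g.continuous.comp
        (((continuous_sly.mul continuous_const).prodMk continuous_id))
  have : Continuous fun y => sly y * ∫ t in Set.Icc (-1 : ℝ) 1, g (sly y * t, y) :=
    continuous_sly.mul h1
  exact this.congr fun y => (Gg_eq g y).symm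

lemma norm_Gg_le (g : BoundedContinuousFunction (ℝ × ℝ) ℝ) (y : ℝ) :
    ‖Gg g y‖ ≤ 2 * ‖g‖ := by
  have h : ‖Gg g y‖ ≤ ‖g‖ * ((volume.restrict (Set.Icc (-(sly y)) (sly y))) Set.univ).toReal :=
    norm_integral_le_of_norm_le_const (by filter_upwards with x using g.norm_coe_le_norm _)
  have hv : ((volume.restrict (Set.Icc (-(sly y)) (sly y))) Set.univ).toReal = 2 * sly y := by
    rw [Measure.restrict_apply_univ, Real.volume_Icc, ENNReal.toReal_ofReal (by linarith [sly_nonneg y])]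
    ring
  rw [hv] at h
  have := sly_le_one y
  have := sly_nonneg y
  have hg : 0 ≤ ‖g‖ := norm_nonneg _
  nlinarith

lemma inner_slice (g : BoundedContinuousFunction (ℝ × ℝ) ℝ) {y : ℝ}
    (hy : y ∈ Set.Icc (-1 : ℝ) 1) :
    ∫ x, Disk.indicator (⇑g) (x, y) ∂(volume.restrict (Set.Icc (-1 : ℝ) 1)) = Gg g y := by
  have hy2 : y ^ 2 ≤ 1 := by
    rcases hy with ⟨h1, h2⟩; nlinarith
  have hsq : sly y ^ 2 = 1 - y ^ 2 := Real.sq_sqrt (by linarith)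
  have hmem : ∀ x : ℝ, (x, y) ∈ Disk ↔ x ∈ Set.Icc (-(sly y)) (sly y) := by
    intro x
    constructor
    · intro hx
      simp only [Disk, Set.mem_setOf_eq] at hx
      constructor
      · nlinarith [sly_nonneg y]
      · nlinarith [sly_nonneg y]
    · intro ⟨h1, h2⟩
      simp only [Disk, Set.mem_setOf_eq]
      nlinarith
  have hind : ∀ x : ℝ, Disk.indicator (⇑g) (x, y)
      = (Set.Icc (-(sly y)) (sly y)).indicator (fun x => g (x, y)) x := by
    intro x
    by_cases hx : (x, y) ∈ Disk
    · rw [Set.indicator_of_mem hx, Set.indicator_of_mem ((hmem x).1 hx)]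
    · rw [Set.indicator_of_notMem hx, Set.indicator_of_notMem (fun h => hx ((hmem x).2 h))]
  simp only [hind]
  rw [integral_indicator measurableSet_Icc, Measure.restrict_restrict measurableSet_Icc]
  have hsub : Set.Icc (-(sly y)) (sly y) ∩ Set.Icc (-1 : ℝ) 1 = Set.Icc (-(sly y)) (sly y) := by
    apply Set.inter_eq_self_of_subset_left
    intro x ⟨h1, h2⟩
    exact ⟨by linarith [sly_le_one y], by linarith [sly_le_one y]⟩
  rw [hsub, Gg]

lemma key (g : BoundedContinuousFunction (ℝ × ℝ) ℝ) (μ : Measure ℝ) [IsProbabilityMeasure μ]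
    (hs : μ (Set.Icc (-1 : ℝ) 1)ᶜ = 0) :
    ∫ p, g p ∂(((volume.restrict (Set.Icc (-1 : ℝ) 1)).prod μ).restrict Disk)
      = ∫ y, Gg g y ∂μ := by
  rw [← integral_indicator measurableSet_Disk,
    integral_prod_symm _ ((g.integrable _).indicator measurableSet_Disk)]
  apply integral_congr_ae
  have hae : ∀ᵐ y ∂μ, y ∈ Set.Icc (-1 : ℝ) 1 := by
    rw [ae_iff]
    exact hs
  filter_upwards [hae] with y hy
  exact inner_slice g hy

lemma Gg_one (y : ℝ) : Gg (1 : BoundedContinuousFunction (ℝ × ℝ) ℝ) y = 2 * sly y := by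
  rw [Gg]
  simp only [BoundedContinuousFunction.coe_one, Pi.one_apply]
  rw [setIntegral_const, measureReal_def, Real.volume_Icc, ENNReal.toReal_ofReal (by linarith [sly_nonneg y])]
  ring_nf

lemma denom_eq (μ : Measure ℝ) [IsProbabilityMeasure μ] (hs : μ (Set.Icc (-1 : ℝ) 1)ᶜ = 0) :
    ((((volume.restrict (Set.Icc (-1 : ℝ) 1)).prod μ) Disk)).toReal
      = ∫ y, 2 * sly y ∂μ := by
  have h := key 1 μ hs
  simp only [BoundedContinuousFunction.coe_one, Pi.one_apply] at h
  rw [integral_const, measureReal_def, Measure.restrict_apply_univ] at h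
  rw [← integral_congr_ae (Filter.Eventually.of_forall fun y => (Gg_one y)), ← h]
  simp

lemma F2_integral (g : BoundedContinuousFunction (ℝ × ℝ) ℝ) (μ : Measure ℝ)
    [IsProbabilityMeasure μ] (hs : μ (Set.Icc (-1 : ℝ) 1)ᶜ = 0) :
    ∫ p, g p ∂(F2 μ) = (∫ y, 2 * sly y ∂μ)⁻¹ * ∫ y, Gg g y ∂μ := by
  rw [F2, integral_smul_measure, key g μ hs, ENNReal.toReal_inv, denom_eq μ hs, smul_eq_mul]

/-- `F₂` is (sequentially) continuous for the weak topology at any probability measure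
`m` on `[-1,1]` giving zero mass to `{-1, 1}`. -/
theorem stmt19 (m : ℕ → Measure ℝ) (mlim : Measure ℝ)
    [∀ n, IsProbabilityMeasure (m n)] [IsProbabilityMeasure mlim]
    (hsupp : ∀ n, m n (Set.Icc (-1 : ℝ) 1)ᶜ = 0)
    (hsupplim : mlim (Set.Icc (-1 : ℝ) 1)ᶜ = 0)
    (hpt : mlim {(-1 : ℝ), 1} = 0)
    (hconv : ∀ f : BoundedContinuousFunction ℝ ℝ,
      Tendsto (fun n => ∫ x, f x ∂(m n)) atTop (nhds (∫ x, f x ∂mlim))) :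
    ∀ g : BoundedContinuousFunction (ℝ × ℝ) ℝ,
      Tendsto (fun n => ∫ p, g p ∂(F2 (m n))) atTop (nhds (∫ p, g p ∂(F2 mlim))) := by
  intro g
  -- bounded continuous versions of the two slice functions
  set H : BoundedContinuousFunction ℝ ℝ :=
    BoundedContinuousFunction.ofNormedAddCommGroup (fun y => 2 * sly y)
      (continuous_const.mul continuous_sly) 2
      (fun y => by
        show ‖2 * sly y‖ ≤ 2
        rw [Real.norm_eq_abs, abs_of_nonneg (by linarith [sly_nonneg y])]
        linarith [sly_le_one y, sly_nonneg y]) with hH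
  set K : BoundedContinuousFunction ℝ ℝ :=
    BoundedContinuousFunction.ofNormedAddCommGroup (Gg g) (continuous_Gg g) (2 * ‖g‖)
      (norm_Gg_le g) with hK
  have hHcoe : ∀ y, H y = 2 * sly y := fun y => rfl
  have hKcoe : ∀ y, K y = Gg g y := fun y => rfl
  have hA : Tendsto (fun n => ∫ y, 2 * sly y ∂(m n)) atTop (nhds (∫ y, 2 * sly y ∂mlim)) := by
    simpa only [hHcoe] using hconv H
  have hB : Tendsto (fun n => ∫ y, Gg g y ∂(m n)) atTop (nhds (∫ y, Gg g y ∂mlim)) := by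
    simpa only [hKcoe] using hconv K
  -- positivity of the limit denominator
  have hpos : 0 < ∫ y, 2 * sly y ∂mlim := by
    have hnn : (0 : ℝ → ℝ) ≤ ⇑H := by
      intro y
      simp only [Pi.zero_apply, hHcoe]
      linarith [sly_nonneg y]
    have hkey : 0 < ∫ y, H y ∂mlim ↔ 0 < mlim (Function.support ⇑H) :=
      integral_pos_iff_support_of_nonneg hnn (H.integrable mlim)
    have hint_eq : ∫ y, H y ∂mlim = ∫ y, 2 * sly y ∂mlim :=
      integral_congr_ae (Filter.Eventually.of_forall fun y => hHcoe y)
    rw [← hint_eq, hkey]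
    have hIoo : Set.Ioo (-1 : ℝ) 1 ⊆ Function.support ⇑H := by
      intro y hy
      have : 0 < sly y := Real.sqrt_pos.2 (by nlinarith [hy.1, hy.2])
      simp only [Function.mem_support, hHcoe]
      exact ne_of_gt (by linarith)
    have hcompl : mlim (Set.Ioo (-1 : ℝ) 1)ᶜ = 0 := by
      have hsub : (Set.Ioo (-1 : ℝ) 1)ᶜ ⊆ (Set.Icc (-1 : ℝ) 1)ᶜ ∪ {(-1 : ℝ), 1} := by
        intro y hy
        simp only [Set.mem_compl_iff, Set.mem_Ioo, not_and_or, not_lt] at hy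
        simp only [Set.mem_union, Set.mem_compl_iff, Set.mem_Icc, Set.mem_insert_iff,
          Set.mem_singleton_iff, not_and_or, not_le]
        by_cases hyI : -1 ≤ y ∧ y ≤ 1
        · right
          rcases hy with h | h
          · left; linarith [hyI.1]
          · right; linarith [hyI.2]
        · left
          rcases not_and_or.1 hyI with h | h
          · left; linarith [lt_of_not_ge h]
          · right; linarith [lt_of_not_ge h]
      refine le_antisymm ?_ zero_le
      calc mlim (Set.Ioo (-1 : ℝ) 1)ᶜ ≤ mlim ((Set.Icc (-1 : ℝ) 1)ᶜ ∪ {(-1 : ℝ), 1}) :=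
            measure_mono hsub
        _ ≤ mlim (Set.Icc (-1 : ℝ) 1)ᶜ + mlim {(-1 : ℝ), 1} := measure_union_le _ _
        _ = 0 := by rw [hsupplim, hpt, add_zero]
    have h1 : (1 : ℝ≥0∞) ≤ mlim (Set.Ioo (-1 : ℝ) 1) := by
      have := measure_union_le (μ := mlim) (Set.Ioo (-1 : ℝ) 1) (Set.Ioo (-1 : ℝ) 1)ᶜ
      rw [Set.union_compl_self, measure_univ, hcompl, add_zero] at this
      exact this
    calc (0 : ℝ≥0∞) < 1 := by norm_num

      _ ≤ mlim (Set.Ioo (-1 : ℝ) 1) := h1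
      _ ≤ mlim (Function.support ⇑H) := measure_mono hIoo
  -- conclude
  have hlim := (hA.inv₀ hpos.ne').mul hB
  have heq : ∀ n, ∫ p, g p ∂(F2 (m n))
      = (∫ y, 2 * sly y ∂(m n))⁻¹ * ∫ y, Gg g y ∂(m n) :=
    fun n => F2_integral g (m n) (hsupp n)
  rw [F2_integral g mlim hsupplim]
  exact hlim.congr fun n => (heq n).symm
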